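/- Every two-step PX attack (A2) contains a weak three: two simple threes (blocks of five aligned consecutive squares with three PX stones and two empty squares) intersecting in exactly one empty square. -/
import Mathlib


/- # A formal model of Gomoku patterns and restricted games -/

abbrev Square := ℤ × ℤ

inductive Cell
  | px | py | empty
deriving DecidableEq

/-- A pattern: a finite set of board squares together with their contents. -/
structure Pattern where
  dom : Finset Square
  val : Square → Cell

def Pattern.emptySquares (p : Pattern) : Finset Square :=
  p.dom.filter (fun s => p.val s = Cell.empty)

/-- Fill (or empty) a square of the pattern with the given content. -/
def Pattern.fill (p : Pattern) (s : Square) (c : Cell) : Pattern :=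
  ⟨p.dom, fun t => if t = s then c else p.val t⟩

/-- Remove a square from the pattern. -/
def Pattern.erase (p : Pattern) (s : Square) : Pattern :=
  ⟨p.dom.erase s, p.val⟩

/-- A PX pattern contains no PY stones. -/
def Pattern.isPX (p : Pattern) : Prop :=
  ∀ s ∈ p.dom, p.val s ≠ Cell.py

/-- The four alignment directions. -/
def dirs : List Square := [(1, 0), (0, 1), (1, 1), (1, -1)]

def shift (s d : Square) (i : ℕ) : Square :=
  (s.1 + (i : ℤ) * d.1, s.2 + (i : ℤ) * d.2)

/-- A block: five aligned consecutive squares starting at `s` in direction `d`. -/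
def blockSquares (s d : Square) : Finset Square :=
  (Finset.range 5).image (fun i => shift s d i)

/-- A line: nine aligned consecutive squares. -/
def lineSquares (s d : Square) : Finset Square :=
  (Finset.range 9).image (fun i => shift s d i)

def lineCenter (s d : Square) : Square := shift s d 4

/-- Five aligned consecutive stones of colour `c` inside the pattern. -/
def hasFive (p : Pattern) (c : Cell) : Prop :=
  ∃ s d, d ∈ dirs ∧ blockSquares s d ⊆ p.dom ∧ ∀ t ∈ blockSquares s d, p.val t = c

/-- `winsIn b n p`: in the game restricted to `p`, with PX to move iff `b`,
PX (playing optimally) forces a five-in-a-row within `n` further plies,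
against any play of PY. -/
def winsIn : Bool → ℕ → Pattern → Prop
  | _, 0, p => hasFive p Cell.px
  | true, n + 1, p =>
      hasFive p Cell.px ∨ (¬ hasFive p Cell.py ∧
        ∃ s ∈ p.emptySquares, winsIn false n (p.fill s Cell.px))
  | false, n + 1, p =>
      hasFive p Cell.px ∨ (¬ hasFive p Cell.py ∧ p.emptySquares.Nonempty ∧
        ∀ s ∈ p.emptySquares, winsIn true n (p.fill s Cell.py))

/-- PX wins the restricted game moving first. -/
def pxWinsFirst (p : Pattern) : Prop := ∃ n, winsIn true n p

/-- PX wins the restricted game moving second. -/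
def pxWinsSecond (p : Pattern) : Prop := ∃ n, winsIn false n p

/-- A PX victory: a PX pattern where PX wins moving first or second. -/
def isVictory (p : Pattern) : Prop := p.isPX ∧ pxWinsFirst p ∧ pxWinsSecond p

/-- A victory of `n` steps: PX, moving second, wins placing `n` stones
(i.e. within `2*n` plies) and no fewer. -/
def victorySteps (p : Pattern) (n : ℕ) : Prop :=
  isVictory p ∧ winsIn false (2 * n) p ∧ ∀ m < n, ¬ winsIn false (2 * m) p

/-- A trigger of a pattern: an empty square whose filling by PX yields a PX victory. -/
def isTrigger (p : Pattern) (s : Square) : Prop :=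
  s ∈ p.emptySquares ∧ isVictory (p.fill s Cell.px)

/-- A PX attack: a PX pattern, not a victory, with a trigger. -/
def isAttack (p : Pattern) : Prop :=
  p.isPX ∧ ¬ isVictory p ∧ ∃ s, isTrigger p s

/-- An attack of `n` steps: `n` is one plus the steps of the fastest victory
reachable by playing a trigger. -/
def attackSteps (p : Pattern) (n : ℕ) : Prop :=
  isAttack p ∧ 1 ≤ n ∧
  (∃ s, isTrigger p s ∧ victorySteps (p.fill s Cell.px) (n - 1)) ∧
  (∀ s m, isTrigger p s → victorySteps (p.fill s Cell.px) m → n - 1 ≤ m)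

/-- A PX threat: a PX pattern, neither victory nor attack, with an empty square
whose filling by PX yields a PX attack. -/
def isThreat (p : Pattern) : Prop :=
  p.isPX ∧ ¬ isVictory p ∧ ¬ isAttack p ∧
  ∃ s ∈ p.emptySquares, isAttack (p.fill s Cell.px)

/-- A threat of `n` steps: one plus the steps of the fastest reachable attack. -/
def threatSteps (p : Pattern) (n : ℕ) : Prop :=
  isThreat p ∧ 2 ≤ n ∧
  (∃ s ∈ p.emptySquares, attackSteps (p.fill s Cell.px) (n - 1)) ∧
  (∀ s ∈ p.emptySquares, ∀ m, attackSteps (p.fill s Cell.px) m → n - 1 ≤ m)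

/-- `q` is a sub-pattern of `p`. -/
def SubPattern (q p : Pattern) : Prop :=
  q.dom ⊆ p.dom ∧ ∀ s ∈ q.dom, q.val s = p.val s

/-- Two patterns are compatible if they agree on common squares. -/
def Compatible (p q : Pattern) : Prop :=
  ∀ s ∈ p.dom ∩ q.dom, p.val s = q.val s

/-- Union of two (compatible) patterns. -/
def Pattern.union (p q : Pattern) : Pattern :=
  ⟨p.dom ∪ q.dom, fun s => if s ∈ p.dom then p.val s else q.val s⟩

open Classical in
/-- The defence of an attack: the empty squares where PY, moving first in the
restricted game, can play to stop PX from winning. -/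
noncomputable def Defence (p : Pattern) : Finset Square :=
  p.emptySquares.filter (fun s => ¬ pxWinsFirst (p.fill s Cell.py))

/-- A simple five as a relative pattern: exactly one block, all PX stones. -/
def isS5Pattern (q : Pattern) : Prop :=
  ∃ s d, d ∈ dirs ∧ q.dom = blockSquares s d ∧ ∀ t ∈ q.dom, q.val t = Cell.px

/-- A simple four as a relative pattern: one block, four PX stones, one empty. -/
def isS4Pattern (q : Pattern) : Prop :=
  ∃ s d, d ∈ dirs ∧ q.dom = blockSquares s d ∧
    (q.dom.filter (fun t => q.val t = Cell.px)).card = 4 ∧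
    (q.dom.filter (fun t => q.val t = Cell.empty)).card = 1

/-- A simple three as a relative pattern: one block, three PX stones, two empty. -/
def isS3Pattern (q : Pattern) : Prop :=
  ∃ s d, d ∈ dirs ∧ q.dom = blockSquares s d ∧
    (q.dom.filter (fun t => q.val t = Cell.px)).card = 3 ∧
    (q.dom.filter (fun t => q.val t = Cell.empty)).card = 2

/-- A PX block of degree 4 on the board `p`: a block inside `p` with no PY
stones and exactly four PX stones. -/
def isPXBlock4 (p : Pattern) (t d : Square) : Prop :=
  blockSquares t d ⊆ p.dom ∧ (∀ u ∈ blockSquares t d, p.val u ≠ Cell.py) ∧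
  ((blockSquares t d).filter (fun u => p.val u = Cell.px)).card = 4

/-- A simple four for colour `c` on board `p`: a block inside `p` with four
stones of colour `c` and a single empty (trigger) square `g`. -/
def isSimpleFourBlock (p : Pattern) (c : Cell) (t d g : Square) : Prop :=
  d ∈ dirs ∧ blockSquares t d ⊆ p.dom ∧ g ∈ blockSquares t d ∧
  p.val g = Cell.empty ∧ ∀ u ∈ blockSquares t d, u ≠ g → p.val u = c

/-- A simple three for PX on board `p`: a block inside `p` with three PX
stones, two empty squares and no PY stones. -/
def isSimpleThreeBlock (p : Pattern) (t d : Square) : Prop :=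
  d ∈ dirs ∧ blockSquares t d ⊆ p.dom ∧ (∀ u ∈ blockSquares t d, p.val u ≠ Cell.py) ∧
  ((blockSquares t d).filter (fun u => p.val u = Cell.px)).card = 3 ∧
  ((blockSquares t d).filter (fun u => p.val u = Cell.empty)).card = 2

/-- The tracker vector of two blocks `A`, `B`: at each square, the number of
blocks among `A`, `B` in which that square is empty. -/
def tracker (p : Pattern) (A B : Finset Square) (t : Square) : ℕ :=
  (if t ∈ A ∧ p.val t = Cell.empty then 1 else 0) +
  (if t ∈ B ∧ p.val t = Cell.empty then 1 else 0)

/-- The pattern `+XXXX+`: six aligned consecutive squares, four PX stones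
flanked by two empty squares. -/
def d4pat : Pattern :=
  ⟨(Finset.range 6).image (fun i : ℕ => ((i : ℤ), (0 : ℤ))),
   fun s => if s = ((0 : ℤ), (0 : ℤ)) ∨ s = ((5 : ℤ), (0 : ℤ)) then Cell.empty else Cell.px⟩

/-- The pattern `XXXX+`: four aligned consecutive PX stones followed by one
empty square. -/
def s4pat : Pattern :=
  ⟨(Finset.range 5).image (fun i : ℕ => ((i : ℤ), (0 : ℤ))),
   fun s => if s = ((4 : ℤ), (0 : ℤ)) then Cell.empty else Cell.px⟩


/- ## Auxiliary lemmas for STATEMENT 8 -/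

lemma card_blockSquares {a d : Square} (hd : d ∈ dirs) : (blockSquares a d).card = 5 := by
  have hd' : d.1 ≠ 0 ∨ d.2 ≠ 0 := by
    fin_cases hd <;> simp
  rw [blockSquares, Finset.card_image_of_injOn, Finset.card_range]
  intro i _ j _ hij
  simp only [shift, Prod.mk.injEq] at hij
  rcases hd' with h | h
  · have h1 : (i : ℤ) * d.1 = (j : ℤ) * d.1 := by linarith [hij.1]
    exact_mod_cast mul_right_cancel₀ h h1
  · have h2 : (i : ℤ) * d.2 = (j : ℤ) * d.2 := by linarith [hij.2]
    exact_mod_cast mul_right_cancel₀ h h2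

lemma winsIn_of_hasFive (b : Bool) (n : ℕ) (p : Pattern) (h : hasFive p Cell.px) :
    winsIn b n p := by
  cases n with
  | zero => cases b <;> exact h
  | succ n => cases b <;> exact Or.inl h

/-- From a winning reply of PX after a PY move at `t`, extract a block with
four PX stones avoiding `t`, whose single empty square is `u ≠ t`. -/
lemma reply (q : Pattern) (hq5 : ¬ hasFive q Cell.px) {t : Square}
    (hw : winsIn true 1 (q.fill t Cell.py)) :
    ∃ u a d, d ∈ dirs ∧ blockSquares a d ⊆ q.dom ∧ u ∈ blockSquares a d ∧
      t ∉ blockSquares a d ∧ u ≠ t ∧ q.val u = Cell.empty ∧ u ∈ q.dom ∧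
      ∀ v ∈ blockSquares a d, v ≠ u → q.val v = Cell.px := by
  have hw' : hasFive (q.fill t Cell.py) Cell.px ∨ (¬ hasFive (q.fill t Cell.py) Cell.py ∧
      ∃ u ∈ (q.fill t Cell.py).emptySquares,
        winsIn false 0 ((q.fill t Cell.py).fill u Cell.px)) := hw
  rcases hw' with h5 | ⟨-, u, hu, h5⟩
  · exfalso
    obtain ⟨a, d, hd, hsub, hall⟩ := h5
    have hts : t ∉ blockSquares a d := by
      intro htm
      have h := hall t htm
      simp [Pattern.fill] at h
    refine hq5 ⟨a, d, hd, hsub, fun v hv => ?_⟩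
    have h := hall v hv
    rwa [show (q.fill t Cell.py).val v = q.val v from
      if_neg (fun hvt => hts (by rw [← hvt]; exact hv))] at h
  · have h5' : hasFive ((q.fill t Cell.py).fill u Cell.px) Cell.px := h5
    obtain ⟨a, d, hd, hsub, hall⟩ := h5'
    have hudom : u ∈ q.dom := (Finset.mem_filter.1 hu).1
    have hue' : (q.fill t Cell.py).val u = Cell.empty := (Finset.mem_filter.1 hu).2
    have hut : u ≠ t := by
      intro h; rw [h] at hue'; simp [Pattern.fill] at hue'
    have hue : q.val u = Cell.empty := by
      rwa [show (q.fill t Cell.py).val u = q.val u from if_neg hut] at hue'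
    have hts : t ∉ blockSquares a d := by
      intro htm
      have h := hall t htm
      simp [Pattern.fill, (Ne.symm hut : t ≠ u)] at h
    have hvalv : ∀ v ∈ blockSquares a d, v ≠ u → q.val v = Cell.px := by
      intro v hv hvu
      have h := hall v hv
      have hvt : v ≠ t := fun hvt => hts (hvt ▸ hv)
      simpa [Pattern.fill, hvu, hvt] using h
    have huB : u ∈ blockSquares a d := by
      by_contra huB
      exact hq5 ⟨a, d, hd, hsub, fun v hv =>
        hvalv v hv (fun hvu => huB (hvu ▸ hv))⟩
    exact ⟨u, a, d, hd, hsub, huB, hts, hut, hue, hudom, hvalv⟩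

/-- Every two-step PX attack (A2) contains a weak three: two simple
threes intersecting in exactly one empty square. -/
theorem stmt8 (p : Pattern) (h : attackSteps p 2) :
    ∃ σ₁ σ₂ : Pattern, SubPattern σ₁ p ∧ SubPattern σ₂ p ∧
      isS3Pattern σ₁ ∧ isS3Pattern σ₂ ∧ σ₁.dom ≠ σ₂.dom ∧
      ((σ₁.dom ∩ σ₂.dom).filter (fun t => p.val t = Cell.empty)).card = 1 := by
  obtain ⟨⟨hpx, hnv, -⟩, -, ⟨s, hTrig, hVic⟩, hMin⟩ := h
  -- p cannot contain a simple four
  have noS4 : ∀ (a d g : Square), d ∈ dirs → blockSquares a d ⊆ p.dom →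
      g ∈ blockSquares a d → p.val g = Cell.empty →
      (∀ v ∈ blockSquares a d, v ≠ g → p.val v = Cell.px) → False := by
    intro a d g hd hsub hg hge hall
    have hfive : hasFive (p.fill g Cell.px) Cell.px := by
      refine ⟨a, d, hd, hsub, fun v hv => ?_⟩
      by_cases hvg : v = g
      · simp [Pattern.fill, hvg]
      · simpa [Pattern.fill, hvg] using hall v hv hvg
    have htrig : isTrigger p g := by
      refine ⟨Finset.mem_filter.2 ⟨hsub hg, hge⟩, ?_, ⟨0, hfive⟩, ⟨0, hfive⟩⟩
      intro v hv
      by_cases hvg : v = g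
      · simp [Pattern.fill, hvg]
      · simpa [Pattern.fill, hvg] using hpx v hv
    have hv0 : victorySteps (p.fill g Cell.px) 0 :=
      ⟨htrig.2, hfive, fun m hm => absurd hm (Nat.not_lt_zero m)⟩
    have := hMin g 0 htrig hv0
    omega
  set q := p.fill s Cell.px with hqdef
  have hqval : ∀ v, v ≠ s → q.val v = p.val v := fun v hv => if_neg hv
  have hqs : q.val s = Cell.px := if_pos rfl
  have hsdom : s ∈ p.dom := (Finset.mem_filter.1 hTrig.1).1
  have hse : p.val s = Cell.empty := (Finset.mem_filter.1 hTrig.1).2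
  have hq5 : ¬ hasFive q Cell.px := fun h5 => hVic.2.2 0 Nat.one_pos h5
  have hw2 : hasFive q Cell.px ∨ (¬ hasFive q Cell.py ∧ q.emptySquares.Nonempty ∧
      ∀ t ∈ q.emptySquares, winsIn true 1 (q.fill t Cell.py)) := hVic.2.1
  obtain ⟨-, hne, hall⟩ := hw2.resolve_left hq5
  obtain ⟨t₀, ht₀⟩ := hne
  obtain ⟨u₁, a₁, d₁, hd₁, hsub₁, hu₁B, -, -, hu₁e, hu₁dom, hB₁⟩ :=
    reply q hq5 (hall t₀ ht₀)
  have hu₁mem : u₁ ∈ q.emptySquares := Finset.mem_filter.2 ⟨hu₁dom, hu₁e⟩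
  obtain ⟨u₂, a₂, d₂, hd₂, hsub₂, hu₂B, hu₁B₂, hu₂u₁, hu₂e, hu₂dom, hB₂⟩ :=
    reply q hq5 (hall u₁ hu₁mem)
  have hu₁s : u₁ ≠ s := fun h => by rw [h, hqs] at hu₁e; cases hu₁e
  have hu₂s : u₂ ≠ s := fun h => by rw [h, hqs] at hu₂e; cases hu₂e
  have hpu₁e : p.val u₁ = Cell.empty := by rw [← hqval u₁ hu₁s]; exact hu₁e
  have hpu₂e : p.val u₂ = Cell.empty := by rw [← hqval u₂ hu₂s]; exact hu₂e
  have hsB₁ : s ∈ blockSquares a₁ d₁ := by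
    by_contra hs
    exact noS4 a₁ d₁ u₁ hd₁ hsub₁ hu₁B hpu₁e (fun v hv hvne => by
      rw [← hqval v (fun h => hs (h ▸ hv))]; exact hB₁ v hv hvne)
  have hsB₂ : s ∈ blockSquares a₂ d₂ := by
    by_contra hs
    exact noS4 a₂ d₂ u₂ hd₂ hsub₂ hu₂B hpu₂e (fun v hv hvne => by
      rw [← hqval v (fun h => hs (h ▸ hv))]; exact hB₂ v hv hvne)
  have hvalB₁ : ∀ v ∈ blockSquares a₁ d₁, v ≠ s → v ≠ u₁ → p.val v = Cell.px :=
    fun v hv hvs hvu => by rw [← hqval v hvs]; exact hB₁ v hv hvu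
  have hvalB₂ : ∀ v ∈ blockSquares a₂ d₂, v ≠ s → v ≠ u₂ → p.val v = Cell.px :=
    fun v hv hvs hvu => by rw [← hqval v hvs]; exact hB₂ v hv hvu
  have hfe₁ : (blockSquares a₁ d₁).filter (fun t => p.val t = Cell.empty) = {s, u₁} := by
    ext v
    simp only [Finset.mem_filter, Finset.mem_insert, Finset.mem_singleton]
    constructor
    · rintro ⟨hv, hve⟩
      by_contra hc
      push_neg at hc
      rw [hvalB₁ v hv hc.1 hc.2] at hve
      cases hve
    · rintro (rfl | rfl)
      exacts [⟨hsB₁, hse⟩, ⟨hu₁B, hpu₁e⟩]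
  have hfe₂ : (blockSquares a₂ d₂).filter (fun t => p.val t = Cell.empty) = {s, u₂} := by
    ext v
    simp only [Finset.mem_filter, Finset.mem_insert, Finset.mem_singleton]
    constructor
    · rintro ⟨hv, hve⟩
      by_contra hc
      push_neg at hc
      rw [hvalB₂ v hv hc.1 hc.2] at hve
      cases hve
    · rintro (rfl | rfl)
      exacts [⟨hsB₂, hse⟩, ⟨hu₂B, hpu₂e⟩]
  have hfx₁ : (blockSquares a₁ d₁).filter (fun t => p.val t = Cell.px) =
      blockSquares a₁ d₁ \ {s, u₁} := by
    ext v
    simp only [Finset.mem_filter, Finset.mem_sdiff, Finset.mem_insert, Finset.mem_singleton]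
    constructor
    · rintro ⟨hv, hvp⟩
      refine ⟨hv, ?_⟩
      rintro (rfl | rfl)
      · rw [hse] at hvp; cases hvp
      · rw [hpu₁e] at hvp; cases hvp
    · rintro ⟨hv, hc⟩
      push_neg at hc
      exact ⟨hv, hvalB₁ v hv hc.1 hc.2⟩
  have hfx₂ : (blockSquares a₂ d₂).filter (fun t => p.val t = Cell.px) =
      blockSquares a₂ d₂ \ {s, u₂} := by
    ext v
    simp only [Finset.mem_filter, Finset.mem_sdiff, Finset.mem_insert, Finset.mem_singleton]
    constructor
    · rintro ⟨hv, hvp⟩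
      refine ⟨hv, ?_⟩
      rintro (rfl | rfl)
      · rw [hse] at hvp; cases hvp
      · rw [hpu₂e] at hvp; cases hvp
    · rintro ⟨hv, hc⟩
      push_neg at hc
      exact ⟨hv, hvalB₂ v hv hc.1 hc.2⟩
  have hc₁ : ({s, u₁} : Finset Square).card = 2 := Finset.card_pair (Ne.symm hu₁s)
  have hc₂ : ({s, u₂} : Finset Square).card = 2 := Finset.card_pair (Ne.symm hu₂s)
  have hssub₁ : ({s, u₁} : Finset Square) ⊆ blockSquares a₁ d₁ := by
    intro v hv
    simp only [Finset.mem_insert, Finset.mem_singleton] at hv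
    rcases hv with rfl | rfl
    exacts [hsB₁, hu₁B]
  have hssub₂ : ({s, u₂} : Finset Square) ⊆ blockSquares a₂ d₂ := by
    intro v hv
    simp only [Finset.mem_insert, Finset.mem_singleton] at hv
    rcases hv with rfl | rfl
    exacts [hsB₂, hu₂B]
  refine ⟨⟨blockSquares a₁ d₁, p.val⟩, ⟨blockSquares a₂ d₂, p.val⟩,
    ⟨hsub₁, fun _ _ => rfl⟩, ⟨hsub₂, fun _ _ => rfl⟩,
    ⟨a₁, d₁, hd₁, rfl, ?_, ?_⟩, ⟨a₂, d₂, hd₂, rfl, ?_, ?_⟩, ?_, ?_⟩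
  · show ((blockSquares a₁ d₁).filter (fun t => p.val t = Cell.px)).card = 3
    rw [hfx₁, Finset.card_sdiff_of_subset hssub₁, hc₁, card_blockSquares hd₁]
  · show ((blockSquares a₁ d₁).filter (fun t => p.val t = Cell.empty)).card = 2
    rw [hfe₁, hc₁]
  · show ((blockSquares a₂ d₂).filter (fun t => p.val t = Cell.px)).card = 3
    rw [hfx₂, Finset.card_sdiff_of_subset hssub₂, hc₂, card_blockSquares hd₂]
  · show ((blockSquares a₂ d₂).filter (fun t => p.val t = Cell.empty)).card = 2
    rw [hfe₂, hc₂]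
  · intro hEq
    have hEq' : blockSquares a₁ d₁ = blockSquares a₂ d₂ := hEq
    exact hu₁B₂ (hEq' ▸ hu₁B)
  · show ((blockSquares a₁ d₁ ∩ blockSquares a₂ d₂).filter
      (fun t => p.val t = Cell.empty)).card = 1
    have hset : (blockSquares a₁ d₁ ∩ blockSquares a₂ d₂).filter
        (fun t => p.val t = Cell.empty) = {s} := by
      ext v
      simp only [Finset.mem_filter, Finset.mem_inter, Finset.mem_singleton]
      constructor
      · rintro ⟨⟨h1, h2⟩, hve⟩
        have hm : v ∈ ({s, u₁} : Finset Square) :=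
          hfe₁ ▸ Finset.mem_filter.2 ⟨h1, hve⟩
        simp only [Finset.mem_insert, Finset.mem_singleton] at hm
        rcases hm with rfl | rfl
        · rfl
        · exact absurd h2 hu₁B₂
      · rintro rfl
        exact ⟨⟨hsB₁, hsB₂⟩, hse⟩
    rw [hset, Finset.card_singleton]
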